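/- Let D be a triangulated category with a t-structure 𝒰 = (U^{≤0}, U^{≥0}) with heart ℋ = U^{≤0} ∩ U^{≥0}, let m be a positive integer, and let S be a triangulated full subcategory of D such that ℋ ⊆ S and (S ∩ U^{≤0}, S ∩ U^{≥0}) is a t-structure on S. Let (Y^{≤0}, Y^{≥0}) be a t-structure on S with S ∩ U^{≤-m} ⊆ Y^{≤0} ⊆ S ∩ U^{≤0}. Then U^{≤-m} * (Y^{≤0} ∩ U^{≥-(m-1)}) = U^{≤-m} * Y^{≤0} and (Y^{≥1} ∩ U^{≤0})[1] * U^{≥0} = Y^{≥0} * U^{≥0}; in particular, the image under the HRS tilting bijection of Proposition 4.1 of the s-torsion pair corresponding to (Y^{≤0}, Y^{≥0}) is the pair (U^{≤-m} * Y^{≤0}, Y^{≥0} * U^{≥0}). -/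

import Mathlib

open CategoryTheory Category Limits Pretriangulated

universe v u

variable (D : Type u) [Category.{v} D] [Preadditive D] [HasZeroObject D]
  [HasShift D ℤ] [∀ n : ℤ, (shiftFunctor D n).Additive]
  [Pretriangulated D] [HasBinaryBiproducts D]

/-- `shiftSet D S n` is the full subcategory `S[n]`: objects isomorphic to `X⟦n⟧`
with `X ∈ S`. -/
def shiftSet (S : Set D) (n : ℤ) : Set D :=
  {A | ∃ B ∈ S, Nonempty (A ≅ B⟦n⟧)}

/-- `starSet D X Y` is `X * Y`: the class of objects `A` admitting a distinguished
triangle `X → A → Y → X[1]` with `X ∈ 𝒳` and `Y ∈ 𝒴`. -/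
def starSet (X Y : Set D) : Set D :=
  {A | ∃ (B C : D) (f : B ⟶ A) (g : A ⟶ C) (h : C ⟶ B⟦(1 : ℤ)⟧),
    B ∈ X ∧ C ∈ Y ∧ Triangle.mk f g h ∈ distTriang D}

/-- `Hom(X, Y) = 0`: every morphism from an object of `X` to an object of `Y` is zero. -/
def homZero (X Y : Set D) : Prop :=
  ∀ A ∈ X, ∀ B ∈ Y, ∀ f : A ⟶ B, f = 0

/-- a class of objects closed under isomorphisms -/
def isoClosed (S : Set D) : Prop :=
  ∀ ⦃A B : D⦄, (A ≅ B) → A ∈ S → B ∈ S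

/-- an additive full subcategory (closed under isomorphisms) which is closed under
direct summands -/
structure AdditiveClosed (S : Set D) : Prop where
  iso : isoClosed D S
  zero : ∀ Z : D, IsZero Z → Z ∈ S
  sum : ∀ A ∈ S, ∀ B ∈ S, (A ⊞ B) ∈ S
  summand : ∀ A ∈ S, ∀ (X : D) (i : X ⟶ A) (p : A ⟶ X), i ≫ p = 𝟙 X → X ∈ S

/-- a torsion pair `(U, V)` in the triangulated category `D` -/
structure IsTorsionPair (U V : Set D) : Prop where
  addU : AdditiveClosed D U
  addV : AdditiveClosed D V
  hom_zero : homZero D U V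
  cover : ∀ A : D, A ∈ starSet D U V

/-- `t₁ ≼ t₂` for torsion pairs in a triangulated category: `U₁ ⊆ U₂` and `U₁[1] ⊆ U₂`. -/
def torsLE (U₁ U₂ : Set D) : Prop :=
  U₁ ⊆ U₂ ∧ shiftSet D U₁ 1 ⊆ U₂

/-- a torsion pair `(T, F)` in an (extension-closed) full subcategory `H` of `D`:
`T` and `F` are additive subcategories of `H` closed under direct summands,
`Hom(T, F) = 0`, and every object of `H` admits a distinguished triangle
`T → X → F → T[1]` with `T ∈ 𝒯`, `F ∈ ℱ`. -/
structure IsTorsionPairIn (H T F : Set D) : Prop where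
  subT : T ⊆ H
  subF : F ⊆ H
  isoT : ∀ ⦃A B : D⦄, (A ≅ B) → A ∈ T → B ∈ H → B ∈ T
  isoF : ∀ ⦃A B : D⦄, (A ≅ B) → A ∈ F → B ∈ H → B ∈ F
  zeroT : ∀ Z : D, IsZero Z → Z ∈ H → Z ∈ T
  zeroF : ∀ Z : D, IsZero Z → Z ∈ H → Z ∈ F
  sumT : ∀ A ∈ T, ∀ B ∈ T, (A ⊞ B) ∈ T
  sumF : ∀ A ∈ F, ∀ B ∈ F, (A ⊞ B) ∈ F
  summandT : ∀ A ∈ T, ∀ (X : D) (i : X ⟶ A) (p : A ⟶ X), i ≫ p = 𝟙 X → X ∈ H → X ∈ T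
  summandF : ∀ A ∈ F, ∀ (X : D) (i : X ⟶ A) (p : A ⟶ X), i ≫ p = 𝟙 X → X ∈ H → X ∈ F
  hom_zero : homZero D T F
  cover : ∀ A ∈ H, A ∈ starSet D T F

/-- an `s`-torsion pair in `H`: a torsion pair with moreover `Hom(T, F[-1]) = 0`. -/
structure IsSTorsionPairIn (H T F : Set D) extends IsTorsionPairIn D H T F : Prop where
  neg_hom_zero : ∀ A ∈ T, ∀ B ∈ F, ∀ f : A ⟶ B⟦(-1 : ℤ)⟧, f = 0

/-- the relation `≼` for torsion pairs in a subcategory `H`: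
`Hom(T, F') = 0` and `Hom(T, F'[-1]) = 0`. -/
def torsLEIn (T F' : Set D) : Prop :=
  homZero D T F' ∧ homZero D T (shiftSet D F' (-1))

/-- a `t`-structure `(L, G) = (S^{≤0}, S^{≥0})` on a triangulated (full) subcategory `S`
of `D` (take `S = Set.univ` for a `t`-structure on `D` itself). -/
structure IsTStructureOn (S L G : Set D) : Prop where
  subL : L ⊆ S
  subG : G ⊆ S
  isoL : ∀ ⦃A B : D⦄, (A ≅ B) → A ∈ L → B ∈ S → B ∈ L
  isoG : ∀ ⦃A B : D⦄, (A ≅ B) → A ∈ G → B ∈ S → B ∈ G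
  hom_zero : homZero D L (shiftSet D G (-1))
  cover : ∀ A ∈ S, A ∈ starSet D L (shiftSet D G (-1))
  shiftL : L ⊆ shiftSet D L (-1)
  shiftG : shiftSet D G (-1) ⊆ G

/-- a `t`-structure `(L, G) = (D^{≤0}, D^{≥0})` on `D`. -/
def IsTStructure (L G : Set D) : Prop := IsTStructureOn D Set.univ L G

/-- a triangulated full subcategory of `D`. -/
structure IsTriangulatedSub (S : Set D) : Prop where
  iso : isoClosed D S
  zero : ∀ Z : D, IsZero Z → Z ∈ S
  shift : ∀ (n : ℤ), ∀ A ∈ S, A⟦n⟧ ∈ S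
  ext₂ : ∀ (T : Triangle D), (T ∈ distTriang D) → T.obj₁ ∈ S → T.obj₃ ∈ S → T.obj₂ ∈ S

/-- an `m`-extended heart on `D`: a full subcategory of the form
`V^{≥ -(m-1)} ∩ V^{≤ 0}` for some `t`-structure `(V^{≤0}, V^{≥0})` on `D`. -/
def IsExtendedHeart (m : ℤ) (E : Set D) : Prop :=
  ∃ L G : Set D, IsTStructure D L G ∧ E = shiftSet D G (m - 1) ∩ L

/-- the relation `E₁ ≤ E₂` for `m`-extended hearts:
`E₁ ⊆ E₂[m] * E₂` and `E₂ ⊆ E₁ * E₁[-m]`. -/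
def extHeartLE (m : ℤ) (E₁ E₂ : Set D) : Prop :=
  E₁ ⊆ starSet D (shiftSet D E₂ m) E₂ ∧ E₂ ⊆ starSet D E₁ (shiftSet D E₁ (-m))

section Helpers

variable {D}

/-! ### Generalities on zero morphisms and isomorphisms -/

lemma zero_of_conj {X Y X' Y' : D} (e : X ≅ X') (e' : Y ≅ Y')
    (h : ∀ g : X' ⟶ Y', g = 0) (f : X ⟶ Y) : f = 0 := by
  have h2 := h (e.inv ≫ f ≫ e'.hom)
  have : f = e.hom ≫ (e.inv ≫ f ≫ e'.hom) ≫ e'.inv := by simp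
  rw [this, h2, zero_comp, comp_zero]

lemma zero_of_shift (n : ℤ) {X Y : D} (f : X ⟶ Y)
    (h : (shiftFunctor D n).map f = 0) : f = 0 := by
  apply (shiftFunctor D n).map_injective
  rw [h, Functor.map_zero]

lemma zero_of_shift_conj (n : ℤ) {X Y X' Y' : D} (e : X⟦n⟧ ≅ X') (e' : Y⟦n⟧ ≅ Y')
    (h : ∀ g : X' ⟶ Y', g = 0) (f : X ⟶ Y) : f = 0 :=
  zero_of_shift n f (zero_of_conj e e' h _)

/-! ### Generalities on `shiftSet` -/

lemma mem_shiftSet_of_iso {T : Set D} {n : ℤ} {A A' : D} (e : A ≅ A')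
    (h : A' ∈ shiftSet D T n) : A ∈ shiftSet D T n := by
  obtain ⟨B, hB, ⟨e'⟩⟩ := h
  exact ⟨B, hB, ⟨e ≪≫ e'⟩⟩

lemma shift_mem_shiftSet {T : Set D} {A : D} (h : A ∈ T) (n : ℤ) :
    A⟦n⟧ ∈ shiftSet D T n :=
  ⟨A, h, ⟨Iso.refl _⟩⟩

lemma mem_shiftSet_zero {T : Set D} {A : D} (h : A ∈ T) : A ∈ shiftSet D T 0 :=
  ⟨A, h, ⟨((shiftFunctorZero D ℤ).app A).symm⟩⟩

lemma shiftSet_mono {T T' : Set D} (h : T ⊆ T') (n : ℤ) :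
    shiftSet D T n ⊆ shiftSet D T' n := by
  rintro A ⟨B, hB, ⟨e⟩⟩
  exact ⟨B, h hB, ⟨e⟩⟩

lemma shiftSet_shift {T : Set D} {n : ℤ} {A : D} (h : A ∈ shiftSet D T n)
    (k l : ℤ) (hkl : n + k = l) : A⟦k⟧ ∈ shiftSet D T l := by
  obtain ⟨B, hB, ⟨e⟩⟩ := h
  exact ⟨B, hB, ⟨(shiftFunctor D k).mapIso e ≪≫ ((shiftFunctorAdd' D n k l hkl).app B).symm⟩⟩

lemma shiftSet_shiftSet {T : Set D} {a b c : ℤ} (h : a + b = c) :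
    shiftSet D (shiftSet D T a) b ⊆ shiftSet D T c := by
  rintro A ⟨B, hB, ⟨e⟩⟩
  obtain ⟨P, hP, ⟨e'⟩⟩ := hB
  exact ⟨P, hP, ⟨e ≪≫ (shiftFunctor D b).mapIso e' ≪≫
    ((shiftFunctorAdd' D a b c h).app P).symm⟩⟩

lemma shiftSet_sub_S {S : Set D} (hS : IsTriangulatedSub D S) {T : Set D}
    (hsub : T ⊆ S) (n : ℤ) : shiftSet D T n ⊆ S := by
  rintro A ⟨B, hB, ⟨e⟩⟩
  exact hS.iso e.symm (hS.shift n B (hsub hB))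

/-! ### Shift-closure of the aisle of a `t`-structure on all of `D` -/

lemma memL_shift_one {L G : Set D} (hU : IsTStructureOn D Set.univ L G)
    {A : D} (hA : A ∈ L) : A⟦(1:ℤ)⟧ ∈ L := by
  obtain ⟨B, hB, ⟨e⟩⟩ := hU.shiftL hA
  exact hU.isoL (((shiftFunctorCompIsoId D (-1:ℤ) 1 (by omega)).app B).symm ≪≫
    ((shiftFunctor D (1:ℤ)).mapIso e).symm) hB (Set.mem_univ _)

lemma memL_shift_nat {L G : Set D} (hU : IsTStructureOn D Set.univ L G)
    {P : D} (hP : P ∈ L) : ∀ n : ℕ, P⟦(n : ℤ)⟧ ∈ L := by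
  intro n
  induction n with
  | zero =>
      refine hU.isoL ?_ hP (Set.mem_univ _)
      exact ((shiftFunctorZero' D ((0:ℕ) : ℤ) (by simp)).app P).symm
  | succ n ih =>
      refine hU.isoL ?_ (memL_shift_one hU ih) (Set.mem_univ _)
      exact ((shiftFunctorAdd' D ((n:ℕ) : ℤ) 1 (((n+1:ℕ)) : ℤ) (by push_cast; ring)).app P).symm

lemma memL_shift_nonneg {L G : Set D} (hU : IsTStructureOn D Set.univ L G)
    {P : D} (hP : P ∈ L) (k : ℤ) (hk : 0 ≤ k) : P⟦k⟧ ∈ L := by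
  obtain ⟨n, rfl⟩ := Int.eq_ofNat_of_zero_le hk
  exact memL_shift_nat hU hP n

/-- The fundamental vanishing: `Hom(L⟦i⟧, G⟦j⟧) = 0` whenever `j + 1 ≤ i`. -/
lemma vanishU {L G : Set D} (hU : IsTStructureOn D Set.univ L G) {A B : D} {i j : ℤ}
    (hA : A ∈ shiftSet D L i) (hB : B ∈ shiftSet D G j) (hij : j + 1 ≤ i)
    (f : A ⟶ B) : f = 0 := by
  obtain ⟨P, hP, ⟨eA⟩⟩ := hA
  obtain ⟨Q, hQ, ⟨eB⟩⟩ := hB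
  refine zero_of_conj eA eB ?_ f
  intro g
  refine zero_of_shift_conj (-(j+1))
    (((shiftFunctorAdd' D i (-(j+1)) (i-(j+1)) (by omega)).app P).symm)
    (((shiftFunctorAdd' D j (-(j+1)) (-1) (by omega)).app Q).symm) ?_ g
  intro g'
  exact hU.hom_zero _ (memL_shift_nonneg hU hP _ (by omega)) _
    (shift_mem_shiftSet hQ (-1)) g'

/-! ### Replacing the objects in a distinguished triangle by isomorphic ones -/

lemma distTriang_conj {T : Triangle D} (hT : T ∈ distTriang D) {A B C : D}
    (e₁ : T.obj₁ ≅ A) (e₂ : T.obj₂ ≅ B) (e₃ : T.obj₃ ≅ C) :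
    Triangle.mk (e₁.inv ≫ T.mor₁ ≫ e₂.hom) (e₂.inv ≫ T.mor₂ ≫ e₃.hom)
      (e₃.inv ≫ T.mor₃ ≫ e₁.hom⟦(1:ℤ)⟧') ∈ distTriang D := by
  refine isomorphic_distinguished _ hT _ ?_
  refine Triangle.isoMk _ _ e₁.symm e₂.symm e₃.symm ?_ ?_ ?_
  · dsimp; erw [Category.assoc, Category.assoc, Iso.hom_inv_id, comp_id]
  · dsimp; erw [Category.assoc, Category.assoc, Iso.hom_inv_id, comp_id]
  · dsimp
    erw [Category.assoc, Category.assoc, ← Functor.map_comp, Iso.hom_inv_id,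
      CategoryTheory.Functor.map_id, comp_id]

/-! ### Membership criteria for aisle and co-aisle of a `t`-structure -/

lemma mem_aisle {S L' G' : Set D} (hT : IsTStructureOn D S L' G') {A : D} (hA : A ∈ S)
    (hvan : ∀ V ∈ shiftSet D G' (-1), ∀ f : A ⟶ V, f = 0) : A ∈ L' := by
  obtain ⟨B, C, f, g, h, hB, hC, hTd⟩ := hT.cover A hA
  have hg : g = 0 := hvan C hC g
  have hzero : IsZero C := by
    rw [IsZero.iff_id_eq_zero]
    obtain ⟨τ, hτ⟩ := Triangle.yoneda_exact₃ _ hTd (𝟙 C)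
      (show g ≫ 𝟙 C = 0 by rw [hg, zero_comp])
    have hτ' : 𝟙 C = h ≫ τ := hτ
    have hτ0 : τ = 0 := by
      obtain ⟨B₁, hB₁, ⟨e⟩⟩ := hT.shiftL hB
      refine zero_of_conj (((shiftFunctor D (1:ℤ)).mapIso e) ≪≫
        (shiftFunctorCompIsoId D (-1:ℤ) 1 (by omega)).app B₁) (Iso.refl _) ?_ τ
      intro g'
      exact hT.hom_zero _ hB₁ _ hC g'
    rw [hτ', hτ0]; exact comp_zero
  have : IsIso f := (Triangle.isZero₃_iff_isIso₁ _ hTd).1 hzero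
  exact hT.isoL (asIso f) hB hA

lemma mem_coaisle {S L' G' : Set D} (hT : IsTStructureOn D S L' G') {A : D}
    (hA : A ∈ S) (hA' : A⟦(-1:ℤ)⟧ ∈ S)
    (hvan : ∀ P ∈ L', ∀ f : P ⟶ A⟦(-1:ℤ)⟧, f = 0) : A ∈ G' := by
  obtain ⟨B, C, f, g, h, hB, hC, hTd⟩ := hT.cover _ hA'
  obtain ⟨C₀, hC₀, ⟨eC⟩⟩ := hC
  have hf : f = 0 := hvan B hB f
  have hzero : IsZero B := by
    rw [IsZero.iff_id_eq_zero]
    obtain ⟨ψ, hψ⟩ := Triangle.coyoneda_exact₂ _ (inv_rot_of_distTriang _ hTd) (𝟙 B)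
      (show 𝟙 B ≫ f = 0 by rw [hf, comp_zero])
    have hψ0 : ψ = 0 := by
      refine hT.hom_zero _ hB _ ?_ ψ
      exact ⟨C₀⟦(-1:ℤ)⟧, hT.shiftG (shift_mem_shiftSet hC₀ (-1)),
        ⟨(shiftFunctor D (-1:ℤ)).mapIso eC⟩⟩
    rw [hψ, hψ0, zero_comp]; rfl
  have : IsIso g := (Triangle.isZero₁_iff_isIso₂ _ hTd).1 hzero
  have eA : A ≅ C₀ :=
    ((shiftFunctorCompIsoId D (-1:ℤ) 1 (by omega)).app A).symm ≪≫
      (shiftFunctor D (1:ℤ)).mapIso (asIso g ≪≫ eC) ≪≫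
      (shiftFunctorCompIsoId D (-1:ℤ) 1 (by omega)).app C₀
  exact hT.isoG eA.symm hC₀ hA

/-- Truncation of `A` at an arbitrary degree, for a `t`-structure on `S`. -/
lemma cover_at {S L' G' : Set D} (hT : IsTStructureOn D S L' G') {A : D} (n : ℤ)
    (hA : A⟦(-n)⟧ ∈ S) :
    ∃ (B C : D) (f : B ⟶ A) (g : A ⟶ C) (h : C ⟶ B⟦(1:ℤ)⟧),
      B ∈ shiftSet D L' n ∧ C ∈ shiftSet D (shiftSet D G' (-1)) n ∧
        Triangle.mk f g h ∈ distTriang D := by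
  obtain ⟨B₀, C₀, f₀, g₀, h₀, hB₀, hC₀, hTd⟩ := hT.cover _ hA
  have hTd' := Triangle.shift_distinguished _ hTd n
  have e₂ : ((CategoryTheory.shiftFunctor (Triangle D) n).obj
      (Triangle.mk f₀ g₀ h₀)).obj₂ ≅ A := (shiftFunctorCompIsoId D (-n) n (by omega)).app A
  exact ⟨B₀⟦n⟧, C₀⟦n⟧, _, _, _, shift_mem_shiftSet hB₀ n, shift_mem_shiftSet hC₀ n,
    distTriang_conj hTd' (Iso.refl _) e₂ (Iso.refl _)⟩

end Helpers

/-- Lemma 5.1: let `S` be a triangulated full subcategory of `D`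
containing the heart `ℋ = U^{≤0} ∩ U^{≥0}` such that `(S ∩ U^{≤0}, S ∩ U^{≥0})` is a
`t`-structure on `S`, and let `(Y^{≤0}, Y^{≥0})` be a `t`-structure on `S` with
`S ∩ U^{≤-m} ⊆ Y^{≤0} ⊆ S ∩ U^{≤0}`. Then
`U^{≤-m} * (Y^{≤0} ∩ U^{≥-(m-1)}) = U^{≤-m} * Y^{≤0}` and
`(Y^{≥1} ∩ U^{≤0})[1] * U^{≥0} = Y^{≥0} * U^{≥0}`; in particular the image under the
HRS tilting `ψ` of Proposition 4.1 of the `s`-torsion pair corresponding to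
`(Y^{≤0}, Y^{≥0})` is the pair `(U^{≤-m} * Y^{≤0}, Y^{≥0} * U^{≥0})`. -/
theorem stmt17 (L G : Set D) (hU : IsTStructure D L G) (m : ℤ) (hm : 1 ≤ m)
    (S : Set D) (hS : IsTriangulatedSub D S) (hHS : L ∩ G ⊆ S)
    (hUS : IsTStructureOn D S (S ∩ L) (S ∩ G))
    (Y₁ Y₂ : Set D) (hY : IsTStructureOn D S Y₁ Y₂)
    (h1 : S ∩ shiftSet D L m ⊆ Y₁) (h2 : Y₁ ⊆ S ∩ L) :
    starSet D (shiftSet D L m) (Y₁ ∩ shiftSet D G (m - 1)) =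
      starSet D (shiftSet D L m) Y₁ ∧
    starSet D (shiftSet D (shiftSet D Y₂ (-1) ∩ L) 1) G = starSet D Y₂ G := by
  have hU' : IsTStructureOn D Set.univ L G := hU
  constructor
  · -- Goal 1 : U^{≤-m} * (Y₁ ∩ U^{≥-(m-1)}) = U^{≤-m} * Y₁
    apply Set.Subset.antisymm
    · rintro A ⟨X, Y, f, g, h, hX, ⟨hY1, _⟩, hTri⟩
      exact ⟨X, Y, f, g, h, hX, hY1, hTri⟩
    · rintro A ⟨X, Y, f, g, h, hX, hYmem, hTri⟩
      -- truncate `Y` at level `-m` with respect to the `U`-t-structure on `S`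
      have hYS : Y ∈ S := (h2 hYmem).1
      obtain ⟨X', Y'', a, t, w, hX'm, hY''m, hTri2⟩ :=
        cover_at hUS m (hS.shift (-m) Y hYS)
      have hX'S : X' ∈ S := shiftSet_sub_S hS (fun _ hx => hx.1) m hX'm
      have hX'L : X' ∈ shiftSet D L m := shiftSet_mono (fun _ hx => hx.2) m hX'm
      have hX'1L : X'⟦(1:ℤ)⟧ ∈ shiftSet D L (m+1) := shiftSet_shift hX'L 1 (m+1) rfl
      have hX'1Y₁ : X'⟦(1:ℤ)⟧ ∈ Y₁ := by
        refine h1 ⟨hS.shift 1 X' hX'S, ?_⟩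
        obtain ⟨P, hP, ⟨e⟩⟩ := hX'1L
        exact ⟨P⟦(1:ℤ)⟧, memL_shift_one hU' hP,
          ⟨e ≪≫ (shiftFunctorAdd' D 1 m (m+1) (by omega)).app P⟩⟩
      have hY''S : Y'' ∈ S :=
        shiftSet_sub_S hS (shiftSet_sub_S hS (fun _ hx => hx.1) (-1)) m hY''m
      have hY''G : Y'' ∈ shiftSet D G (m-1) :=
        shiftSet_shiftSet (by omega)
          (shiftSet_mono (shiftSet_mono (fun _ hx => hx.2) (-1)) m hY''m)
      -- `Y'' ∈ Y₁`
      have hY''Y₁ : Y'' ∈ Y₁ := by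
        refine mem_aisle hY hY''S ?_
        intro V hV φ
        have h0 : t ≫ φ = 0 := hY.hom_zero Y hYmem V hV _
        obtain ⟨τ, hτ⟩ := Triangle.yoneda_exact₃ _ hTri2 φ h0
        have hτ' : φ = w ≫ τ := hτ
        rw [hτ', hY.hom_zero _ hX'1Y₁ _ hV τ, comp_zero]
      -- the new triangle over `A`
      obtain ⟨Z, q, r, hTri3⟩ := distinguished_cocone_triangle (g ≫ t)
      -- every map `Z ⟶ V⟦m⟧` with `V ∈ G` vanishes
      have hZclaim : ∀ V, V ∈ G → ∀ φ : Z ⟶ V⟦m⟧, φ = 0 := by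
        intro V hV φ
        have hWm : (V⟦m⟧) ∈ shiftSet D G m := shift_mem_shiftSet hV m
        -- (a1)
        have hσ0 : t ≫ q ≫ φ = 0 := by
          have hg0 : g ≫ t ≫ q ≫ φ = 0 := by
            have h12 : (g ≫ t) ≫ q = 0 := comp_distTriang_mor_zero₁₂ _ hTri3
            rw [← Category.assoc, ← Category.assoc, h12, zero_comp]
          obtain ⟨τ, hτ⟩ := Triangle.yoneda_exact₃ _ hTri (t ≫ q ≫ φ) hg0
          have hτ' : t ≫ q ≫ φ = h ≫ τ := hτ
          rw [hτ', vanishU hU' (shiftSet_shift hX 1 (m+1) rfl) hWm (by omega) τ, comp_zero]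
        -- (a2)
        have hρ0 : q ≫ φ = 0 := by
          obtain ⟨τ', hτ'⟩ := Triangle.yoneda_exact₃ _ hTri2 (q ≫ φ) hσ0
          have hτ'' : q ≫ φ = w ≫ τ' := hτ'
          rw [hτ'', vanishU hU' (shiftSet_shift hX'L 1 (m+1) rfl) hWm (by omega) τ', comp_zero]
        -- (b)
        obtain ⟨τ'', hτ''⟩ := Triangle.yoneda_exact₃ _ hTri3 φ hρ0
        have hφr : φ = r ≫ τ'' := hτ''
        -- (c)
        have hfτ : f⟦(1:ℤ)⟧' ≫ τ'' = 0 :=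
          vanishU hU' (shiftSet_shift hX 1 (m+1) rfl) hWm (by omega) _
        obtain ⟨χ, hχ⟩ := Triangle.yoneda_exact₃ _
          (rot_of_distTriang _ (rot_of_distTriang _ hTri)) τ''
          (show (-(f⟦(1:ℤ)⟧')) ≫ τ'' = 0 by erw [Preadditive.neg_comp, hfτ, neg_zero])
        have hχ' : τ'' = (-(g⟦(1:ℤ)⟧')) ≫ χ := hχ
        -- (d)
        have hθt : (r ≫ g⟦(1:ℤ)⟧') ≫ t⟦(1:ℤ)⟧' = 0 := by
          have h31 : r ≫ (g ≫ t)⟦(1:ℤ)⟧' = 0 := comp_distTriang_mor_zero₃₁ _ hTri3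
          rw [Category.assoc, ← Functor.map_comp]
          exact h31
        -- (e)
        obtain ⟨θ', hθ'⟩ := Triangle.coyoneda_exact₂ _
          (rot_of_distTriang _ (rot_of_distTriang _ (rot_of_distTriang _ hTri2)))
          (r ≫ g⟦(1:ℤ)⟧')
          (show (r ≫ g⟦(1:ℤ)⟧') ≫ (-(t⟦(1:ℤ)⟧')) = 0 by rw [Preadditive.comp_neg, hθt, neg_zero])
        have hθ'' : r ≫ g⟦(1:ℤ)⟧' = θ' ≫ (-(a⟦(1:ℤ)⟧')) := hθ'
        -- (f)
        have hξ : a⟦(1:ℤ)⟧' ≫ χ = 0 :=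
          vanishU hU' (shiftSet_shift hX'L 1 (m+1) rfl) hWm (by omega) _
        rw [hφr, hχ']
        erw [Preadditive.neg_comp, Preadditive.comp_neg, neg_eq_zero, ← Category.assoc, hθ'', Category.assoc,
          Preadditive.neg_comp, hξ, neg_zero, comp_zero]
      -- hence `Z⟦-1⟧ ∈ U^{≤-m}`
      have hZmem : Z⟦-(m+1)⟧ ∈ L := by
        refine mem_aisle hU' (Set.mem_univ _) ?_
        rintro V' ⟨V, hV, ⟨eV⟩⟩ ψ
        refine zero_of_shift_conj (m+1)
          ((shiftFunctorCompIsoId D (-(m+1)) (m+1) (by omega)).app Z)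
          ((shiftFunctor D (m+1)).mapIso eV ≪≫
            ((shiftFunctorAdd' D (-1) (m+1) m (by omega)).app V).symm) ?_ ψ
        intro g'
        exact hZclaim V hV g'
      have hZm1 : Z⟦(-1:ℤ)⟧ ∈ shiftSet D L m :=
        ⟨Z⟦-(m+1)⟧, hZmem, ⟨(shiftFunctorAdd' D (-(m+1)) m (-1) (by omega)).app Z⟩⟩
      exact ⟨Z⟦(-1:ℤ)⟧, Y'', (Triangle.mk (g ≫ t) q r).invRotate.mor₁, g ≫ t,
        (Triangle.mk (g ≫ t) q r).invRotate.mor₃, hZm1, ⟨hY''Y₁, hY''G⟩,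
        inv_rot_of_distTriang _ hTri3⟩
  · -- Goal 2 : (Y₂⟦-1⟧ ∩ U^{≤0})⟦1⟧ * U^{≥0} = Y₂ * U^{≥0}
    apply Set.Subset.antisymm
    · rintro A ⟨B, C, f, g, h, hB, hC, hTri⟩
      obtain ⟨B₀, ⟨hB₀Y, hB₀L⟩, ⟨e⟩⟩ := hB
      obtain ⟨V, hV, ⟨e'⟩⟩ := hB₀Y
      have eVB : V ≅ B :=
        ((shiftFunctorCompIsoId D (-1:ℤ) 1 (by omega)).app V).symm ≪≫
          ((shiftFunctor D (1:ℤ)).mapIso e').symm ≪≫ e.symm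
      have hBS : B ∈ S := hS.iso eVB (hY.subG hV)
      exact ⟨B, C, f, g, h, hY.isoG eVB hV hBS, hC, hTri⟩
    · rintro A ⟨Z, W, f, g, h, hZY, hWG, hTri⟩
      have hZS : Z ∈ S := hY.subG hZY
      obtain ⟨Z₁, Z₀, e, p, v, hZ₁m, hZ₀m, hTri2⟩ :=
        cover_at hUS 1 (hS.shift (-1) Z hZS)
      have hZ₁S : Z₁ ∈ S := shiftSet_sub_S hS (fun _ hx => hx.1) 1 hZ₁m
      have hZ₁L : Z₁ ∈ shiftSet D L 1 := shiftSet_mono (fun _ hx => hx.2) 1 hZ₁m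
      have hZ₀S : Z₀ ∈ S :=
        shiftSet_sub_S hS (shiftSet_sub_S hS (fun _ hx => hx.1) (-1)) 1 hZ₀m
      have hZ₀G : Z₀ ∈ shiftSet D G 0 :=
        shiftSet_shiftSet (by omega)
          (shiftSet_mono (shiftSet_mono (fun _ hx => hx.2) (-1)) 1 hZ₀m)
      obtain ⟨B₁, ⟨hB₁S, hB₁L⟩, ⟨eZ₁⟩⟩ := hZ₁m
      -- `Z₁ ∈ Y₂`
      have hZ₁Y₂ : Z₁ ∈ Y₂ := by
        refine mem_coaisle hY hZ₁S (hS.shift (-1) Z₁ hZ₁S) ?_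
        intro P hP φ
        have h0 : φ ≫ e⟦(-1:ℤ)⟧' = 0 :=
          hY.hom_zero P hP _ ⟨Z, hZY, ⟨Iso.refl _⟩⟩ _
        obtain ⟨ψ, hψ⟩ := Triangle.coyoneda_exact₂ _
          (inv_rot_of_distTriang _ (Triangle.shift_distinguished _ hTri2 (-1))) φ
          (show φ ≫ ((-1:ℤ).negOnePow • e⟦(-1:ℤ)⟧') = 0 by
            rw [Linear.comp_units_smul, h0, smul_zero])
        have hψ' : φ = ψ ≫ ((Triangle.mk e p v)⟦(-1:ℤ)⟧).invRotate.mor₁ := hψ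
        have hψ0 : ψ = 0 := by
          refine vanishU hU' (A := P) (B := Z₀⟦(-1:ℤ)⟧⟦(-1:ℤ)⟧) (i := 0) (j := -2)
            (mem_shiftSet_zero (h2 hP).2)
            (shiftSet_shift (shiftSet_shift hZ₀G (-1) (-1) (by omega)) (-1) (-2) (by omega))
            (by omega) ψ
        rw [hψ', hψ0, zero_comp]; rfl
      have hZ₁mem : Z₁ ∈ shiftSet D (shiftSet D Y₂ (-1) ∩ L) 1 := by
        refine ⟨B₁, ⟨⟨Z₁, hZ₁Y₂, ?_⟩, hB₁L⟩, ⟨eZ₁⟩⟩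
        exact ⟨((shiftFunctorCompIsoId D (1:ℤ) (-1) (by omega)).app B₁).symm ≪≫
          ((shiftFunctor D (-1:ℤ)).mapIso eZ₁).symm⟩
      -- the new triangle over `A`
      obtain ⟨Q, q, r, hTri3⟩ := distinguished_cocone_triangle (e ≫ f)
      have hQG : Q ∈ G := by
        refine mem_coaisle hU' (Set.mem_univ _) (Set.mem_univ _) ?_
        intro P hP ψ₀
        refine zero_of_shift_conj 1 (Iso.refl _)
          ((shiftFunctorCompIsoId D (-1:ℤ) 1 (by omega)).app Q) ?_ ψ₀
        intro ψ
        have hP1 : P⟦(1:ℤ)⟧ ∈ shiftSet D L 1 := shift_mem_shiftSet hP 1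
        -- (a)
        have hξ0 : (ψ ≫ r) ≫ e⟦(1:ℤ)⟧' ≫ f⟦(1:ℤ)⟧' = 0 := by
          have h31 : r ≫ (e ≫ f)⟦(1:ℤ)⟧' = 0 := comp_distTriang_mor_zero₃₁ _ hTri3
          rw [Category.assoc, ← Functor.map_comp, ← Category.assoc] at *
          rw [Category.assoc, h31, comp_zero]
        obtain ⟨ζ, hζ⟩ := Triangle.coyoneda_exact₂ _
          (rot_of_distTriang _ (rot_of_distTriang _ hTri))
          ((ψ ≫ r) ≫ e⟦(1:ℤ)⟧')
          (show ((ψ ≫ r) ≫ e⟦(1:ℤ)⟧') ≫ (-(f⟦(1:ℤ)⟧')) = 0 by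
            rw [Preadditive.comp_neg, Category.assoc, Category.assoc, ← Category.assoc, hξ0, neg_zero])
        have hζ' : (ψ ≫ r) ≫ e⟦(1:ℤ)⟧' = ζ ≫ h := hζ
        have hζ0 : ζ = 0 :=
          vanishU hU' hP1 (mem_shiftSet_zero hWG) (by omega) ζ
        -- (b)
        have hη0 : ψ ≫ r = 0 := by
          have hηe : (ψ ≫ r) ≫ (-(e⟦(1:ℤ)⟧')) = 0 := by
            erw [Preadditive.comp_neg, hζ', hζ0, zero_comp, neg_zero]
          obtain ⟨ζ', hζ'2⟩ := Triangle.coyoneda_exact₂ _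
            (rot_of_distTriang _ (rot_of_distTriang _ hTri2)) (ψ ≫ r) hηe
          have hζ'3 : ψ ≫ r = ζ' ≫ v := hζ'2
          erw [hζ'3, vanishU hU' hP1 hZ₀G (by omega) ζ', zero_comp]
        -- (c)
        obtain ⟨ψ', hψ'⟩ := Triangle.coyoneda_exact₃ _ hTri3 ψ hη0
        have hψ'2 : ψ = ψ' ≫ q := hψ'
        -- (d)
        have hg0 : ψ' ≫ g = 0 := vanishU hU' hP1 (mem_shiftSet_zero hWG) (by omega) _
        obtain ⟨ψ'', hψ''⟩ := Triangle.coyoneda_exact₂ _ hTri ψ' hg0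
        have hψ''2 : ψ' = ψ'' ≫ f := hψ''
        -- (e)
        have hp0 : ψ'' ≫ p = 0 := vanishU hU' hP1 hZ₀G (by omega) _
        obtain ⟨ψ''', hψ'''⟩ := Triangle.coyoneda_exact₂ _ hTri2 ψ'' hp0
        have hψ'''2 : ψ'' = ψ''' ≫ e := hψ'''
        -- (f)
        have h12 : (e ≫ f) ≫ q = 0 := comp_distTriang_mor_zero₁₂ _ hTri3
        rw [hψ'2, hψ''2, hψ'''2]
        erw [Category.assoc, Category.assoc]
        erw [← Category.assoc e, h12, comp_zero]
      exact ⟨Z₁, Q, e ≫ f, q, r, hZ₁mem, hQG, hTri3⟩
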